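/- For Rule 108 on a ring of size n, any configuration containing the cyclic factor 0011100 never reaches a fixed point under any sequential update mode: the middle cell alternates between 1 and 0 forever while the surrounding walls 001 and 100 never change. -/
import Mathlib


/-- Single-cell update: replace the state of cell `i` by the local rule applied
to its neighborhood on the ring `ZMod n`. -/
def eupdate (n : ℕ) (f : Bool → Bool → Bool → Bool) (x : ZMod n → Bool) (i : ZMod n) :
    ZMod n → Bool :=
  Function.update x i (f (x (i - 1)) (x i) (x (i + 1)))

/-- Synchronous (parallel) step. -/
def parStep (n : ℕ) (f : Bool → Bool → Bool → Bool) (x : ZMod n → Bool) : ZMod n → Bool :=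
  fun i => f (x (i - 1)) (x i) (x (i + 1))

/-- `x` is a fixed point of the parallel dynamics. -/
def IsFixedConfig (n : ℕ) (f : Bool → Bool → Bool → Bool) (x : ZMod n → Bool) : Prop :=
  ∀ i : ZMod n, f (x (i - 1)) (x i) (x (i + 1)) = x i

/-- One full sequential step under the sequential update mode `μ`
(a permutation of the cells): update cells one at a time in the order
`μ 0, μ 1, …, μ (n-1)`. -/
def seqStep (n : ℕ) (f : Bool → Bool → Bool → Bool) (μ : Fin n ≃ ZMod n)
    (x : ZMod n → Bool) : ZMod n → Bool :=
  (List.finRange n).foldl (fun y k => eupdate n f y (μ k)) x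

/-- One full sequential step under the descending order `(n-1, n-2, …, 0)`. -/
def seqStepDesc (n : ℕ) (f : Bool → Bool → Bool → Bool) (x : ZMod n → Bool) : ZMod n → Bool :=
  ((List.range n).reverse).foldl (fun y k => eupdate n f y (k : ZMod n)) x

/-- One full sequential step under the ascending order `(0, 1, …, n-1)`. -/
def seqStepAsc (n : ℕ) (f : Bool → Bool → Bool → Bool) (x : ZMod n → Bool) : ZMod n → Bool :=
  (List.range n).foldl (fun y k => eupdate n f y (k : ZMod n)) x

def rule108 : Bool → Bool → Bool → Bool
  | true, true, true => false
  | true, true, false => true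
  | true, false, true => true
  | true, false, false => false
  | false, true, true => true
  | false, true, false => true
  | false, false, true => false
  | false, false, false => false

def Pinv (n : ℕ) (i : ZMod n) (y : ZMod n → Bool) : Prop :=
  y i = false ∧ y (i+1) = false ∧ y (i+2) = true ∧ y (i+4) = true ∧
    y (i+5) = false ∧ y (i+6) = false

lemma Pinv_eupdate (n : ℕ) (i j : ZMod n) (y : ZMod n → Bool) (h : Pinv n i y) :
    Pinv n i (eupdate n rule108 y j) := by
  obtain ⟨h0, h1, h2, h4, h5, h6⟩ := h
  unfold eupdate Pinv
  refine ⟨?_, ?_, ?_, ?_, ?_, ?_⟩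
  · rw [Function.update_apply]
    split_ifs with hj
    · subst hj
      rw [h0, h1]; cases y (i - 1) <;> rfl
    · exact h0
  · rw [Function.update_apply]
    split_ifs with hj
    · subst hj
      have e1 : i + 1 - 1 = i := by ring
      have e2 : i + 1 + 1 = i + 2 := by ring
      rw [e1, e2, h0, h1, h2]; rfl
    · exact h1
  · rw [Function.update_apply]
    split_ifs with hj
    · subst hj
      have e1 : i + 2 - 1 = i + 1 := by ring
      rw [e1, h1, h2]; cases y (i + 2 + 1) <;> rfl
    · exact h2
  · rw [Function.update_apply]
    split_ifs with hj
    · subst hj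
      have e2 : i + 4 + 1 = i + 5 := by ring
      rw [e2, h4, h5]; cases y (i + 4 - 1) <;> rfl
    · exact h4
  · rw [Function.update_apply]
    split_ifs with hj
    · subst hj
      have e1 : i + 5 - 1 = i + 4 := by ring
      have e2 : i + 5 + 1 = i + 6 := by ring
      rw [e1, e2, h4, h5, h6]; rfl
    · exact h5
  · rw [Function.update_apply]
    split_ifs with hj
    · subst hj
      have e1 : i + 6 - 1 = i + 5 := by ring
      rw [e1, h5, h6]; cases y (i + 6 + 1) <;> rfl
    · exact h6

lemma Pinv_foldl (n : ℕ) (i : ZMod n) (μ : Fin n ≃ ZMod n) (l : List (Fin n))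
    (y : ZMod n → Bool) (h : Pinv n i y) :
    Pinv n i (l.foldl (fun y k => eupdate n rule108 y (μ k)) y) := by
  induction l generalizing y with
  | nil => exact h
  | cons a l ih => exact ih _ (Pinv_eupdate n i (μ a) y h)

lemma Pinv_seqStep (n : ℕ) (i : ZMod n) (μ : Fin n ≃ ZMod n)
    (y : ZMod n → Bool) (h : Pinv n i y) : Pinv n i (seqStep n rule108 μ y) :=
  Pinv_foldl n i μ _ y h

theorem rule108_0011100_never_fixed (n : ℕ) (hn : 0 < n) (x : ZMod n → Bool)
    (i : ZMod n)
    (hx : x i = false ∧ x (i + 1) = false ∧ x (i + 2) = true ∧ x (i + 3) = true ∧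
          x (i + 4) = true ∧ x (i + 5) = false ∧ x (i + 6) = false)
    (μ : Fin n ≃ ZMod n) :
    ∀ t : ℕ, ¬ IsFixedConfig n rule108 ((seqStep n rule108 μ)^[t] x) := by
  obtain ⟨a0, a1, a2, _, a4, a5, a6⟩ := hx
  have hP0 : Pinv n i x := ⟨a0, a1, a2, a4, a5, a6⟩
  intro t
  have hP : Pinv n i ((seqStep n rule108 μ)^[t] x) := by
    induction t with
    | zero => exact hP0
    | succ t ih =>
      rw [Function.iterate_succ_apply']
      exact Pinv_seqStep n i μ _ ih
  intro hfix
  obtain ⟨_, _, h2, h4, _, _⟩ := hP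
  have := hfix (i + 3)
  have e1 : i + 3 - 1 = i + 2 := by ring
  have e2 : i + 3 + 1 = i + 4 := by ring
  rw [e1, e2, h2, h4] at this
  cases hb : (seqStep n rule108 μ)^[t] x (i + 3) <;> rw [hb] at this <;> simp [rule108] at this
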